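/- Suppose f : [a,b] → ℝ is a continuous left almost convex function with corresponding interior points c < d of [a,b], i.e., (i) the restriction of f to [c,b] is convex, and (ii) f ≥ h on [a,c], where h is the affine function joining the points (c, f(c)) and (d, f(d)). Let μ be a Steffensen-Popoviciu measure on [a,b] with barycenter b_μ = (1/μ([a,b])) ∫_a^b x dμ(x). If b_μ ≥ c and ∫_a^d ( (f(x) − f(c))(d − c) − (f(d) − f(c))(x − c) ) dμ(x) ≥ 0, then f(b_μ) ≤ (1/μ([a,b])) ∫_a^b f(x) dμ(x). -/

import Mathlib

open MeasureTheory

private lemma affine_convexOn (t : Set ℝ) (ht : Convex ℝ t) (q r : ℝ) :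
    ConvexOn ℝ t (fun x => q + r * x) := by
  refine ⟨ht, fun x _ y _ α β hα hβ hab => le_of_eq ?_⟩
  simp only [smul_eq_mul]
  linear_combination q * hab.symm

private lemma affine_concaveOn (t : Set ℝ) (ht : Convex ℝ t) (q r : ℝ) :
    ConcaveOn ℝ t (fun x => q + r * x) := by
  refine ⟨ht, fun x _ y _ α β hα hβ hab => le_of_eq ?_⟩
  simp only [smul_eq_mul]
  linear_combination (-q) * hab.symm

private lemma exists_support_slope {ψ : ℝ → ℝ} {a b p : ℝ}
    (hψ : ConvexOn ℝ (Set.Icc a b) ψ) (hap : a < p) (hpb : p < b) :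
    ∃ s : ℝ, (ψ p - ψ a) / (p - a) ≤ s ∧ ∀ x ∈ Set.Icc a b, ψ p + s * (x - p) ≤ ψ x := by
  have hab : a ≤ b := le_of_lt (hap.trans hpb)
  have hpI : p ∈ Set.Icc a b := ⟨hap.le, hpb.le⟩
  have haI : a ∈ Set.Icc a b := Set.left_mem_Icc.2 hab
  set S : Set ℝ := (fun y => (ψ y - ψ p) / (y - p)) '' Set.Ioc p b with hS
  have hSne : S.Nonempty := ⟨_, ⟨b, ⟨hpb, le_rfl⟩, rfl⟩⟩
  have hlb : ∀ z ∈ S, (ψ p - ψ a) / (p - a) ≤ z := by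
    rintro z ⟨y, hy, rfl⟩
    exact hψ.slope_mono_adjacent haI ⟨(hap.trans hy.1).le, hy.2⟩ hap hy.1
  have hbdd : BddBelow S := ⟨_, hlb⟩
  refine ⟨sInf S, le_csInf hSne hlb, fun x hx => ?_⟩
  rcases lt_trichotomy x p with hxp | rfl | hpx
  · have hkey : (ψ p - ψ x) / (p - x) ≤ sInf S := by
      refine le_csInf hSne ?_
      rintro z ⟨y, hy, rfl⟩
      exact hψ.slope_mono_adjacent hx ⟨(hap.trans hy.1).le, hy.2⟩ hxp hy.1
    have h1 : 0 < p - x := by linarith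
    rw [div_le_iff₀ h1] at hkey
    nlinarith
  · simp
  · have hkey : sInf S ≤ (ψ x - ψ p) / (x - p) :=
      csInf_le hbdd ⟨x, ⟨hpx, hx.2⟩, rfl⟩
    have h1 : 0 < x - p := by linarith
    rw [le_div_iff₀ h1] at hkey
    linarith

private lemma integral_affine (μ : Measure ℝ) [IsFiniteMeasure μ] (a b q r : ℝ) :
    ∫ x in Set.Icc a b, (q + r * x) ∂μ
      = q * (μ (Set.Icc a b)).toReal + r * ∫ x in Set.Icc a b, x ∂μ := by
  have hid : IntegrableOn (fun x : ℝ => x) (Set.Icc a b) μ :=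
    continuousOn_id.integrableOn_compact isCompact_Icc
  rw [integral_add (integrable_const q) (hid.const_mul r), integral_const_mul,
    setIntegral_const, smul_eq_mul, mul_comm, measureReal_def]
set_option maxHeartbeats 1000000 in
theorem jensen_left_almost_convex
    (a b c d : ℝ) (hac : a < c) (hcd : c < d) (hdb : d < b)
    (f : ℝ → ℝ) (hf_cont : ContinuousOn f (Set.Icc a b))
    (hf_conv : ConvexOn ℝ (Set.Icc c b) f)
    (h : ℝ → ℝ)
    (hh : h = fun x => f c + (f d - f c) / (d - c) * (x - c))
    (hf_above : ∀ x ∈ Set.Icc a c, h x ≤ f x)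
    (μ₁ μ₂ : Measure ℝ) [IsFiniteMeasure μ₁] [IsFiniteMeasure μ₂]
    (hμ₁ : μ₁ (Set.Icc a b)ᶜ = 0) (hμ₂ : μ₂ (Set.Icc a b)ᶜ = 0)
    (m : ℝ) (hm_def : m = (μ₁ (Set.Icc a b)).toReal - (μ₂ (Set.Icc a b)).toReal)
    (hm_pos : 0 < m)
    (hSP : ∀ g : ℝ → ℝ, ContinuousOn g (Set.Icc a b) →
      ConvexOn ℝ (Set.Icc a b) g → (∀ x ∈ Set.Icc a b, 0 ≤ g x) →
      0 ≤ (∫ x in Set.Icc a b, g x ∂μ₁) - ∫ x in Set.Icc a b, g x ∂μ₂)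
    (bμ : ℝ)
    (hbμ_def : bμ = m⁻¹ * ((∫ x in Set.Icc a b, x ∂μ₁) - ∫ x in Set.Icc a b, x ∂μ₂))
    (hbμ_ge : c ≤ bμ)
    (hii : 0 ≤ (∫ x in Set.Icc a d,
          ((f x - f c) * (d - c) - (f d - f c) * (x - c)) ∂μ₁) -
        ∫ x in Set.Icc a d, ((f x - f c) * (d - c) - (f d - f c) * (x - c)) ∂μ₂) :
    f bμ ≤ m⁻¹ * ((∫ x in Set.Icc a b, f x ∂μ₁) - ∫ x in Set.Icc a b, f x ∂μ₂) := by
  have hdc : (0:ℝ) < d - c := by linarith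
  have hab : a ≤ b := by linarith
  set s0 : ℝ := (f d - f c) / (d - c) with hs0
  have hs0dc : s0 * (d - c) = f d - f c := div_mul_cancel₀ _ (ne_of_gt hdc)
  set φ : ℝ → ℝ := fun x => if x ≤ d then f c + s0 * (x - c) else f x with hφ
  -- chord below f to the right of d
  have h_ge : ∀ z ∈ Set.Icc a b, d < z → f c + s0 * (z - c) ≤ f z := by
    intro z hz hdz
    have h1 := hf_conv.slope_mono_adjacent (x := c) (y := d) (z := z)
      ⟨le_rfl, by linarith⟩ ⟨by linarith, hz.2⟩ hcd hdz
    rw [← hs0] at h1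
    rw [le_div_iff₀ (by linarith : (0:ℝ) < z - d)] at h1
    have h2 : s0 * (z - c) = s0 * (d - c) + s0 * (z - d) := by ring
    linarith
  -- chord above f on [c, d]
  have h_le : ∀ t ∈ Set.Icc c d, f t ≤ f c + s0 * (t - c) := by
    intro t ht
    rcases eq_or_lt_of_le ht.1 with rfl | hct
    · simp
    rcases eq_or_lt_of_le ht.2 with rfl | htd
    · linarith [hs0dc]
    have key := hf_conv.slope_mono_adjacent (x := c) (y := t) (z := d)
      ⟨le_rfl, by linarith⟩ ⟨hcd.le, by linarith⟩ hct htd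
    rw [div_le_div_iff₀ (by linarith) (by linarith)] at key
    have h2 : s0 * (t - c) * (d - c) = (f d - f c) * (t - c) := by
      rw [mul_right_comm, hs0dc]
    have h3 : 0 ≤ (f c + s0 * (t - c) - f t) * (d - c) := by nlinarith [key, h2]
    nlinarith [h3, hdc]
  -- continuity of φ
  have φcont : ContinuousOn φ (Set.Icc a b) := by
    rw [hφ]
    apply ContinuousOn.if
    · intro x hx
      have : x = d := by
        have := hx.2
        rw [show {a : ℝ | a ≤ d} = Set.Iic d from rfl, frontier_Iic] at this
        simpa using this
      subst this
      simp [hs0dc]  -- f c + s0*(d-c) = f d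
    · exact (Continuous.continuousOn (continuous_const.add (continuous_const.mul (continuous_id.sub continuous_const))))
    · refine hf_cont.mono ?_
      intro x hx; exact hx.1
  -- convexity of φ
  have φconv : ConvexOn ℝ (Set.Icc a b) φ := by
    apply convexOn_of_slope_mono_adjacent (convex_Icc a b)
    intro x y z hx hz hxy hyz
    have hy : y ∈ Set.Icc a b := ⟨hx.1.trans hxy.le, hyz.le.trans hz.2⟩
    by_cases hyd : y ≤ d
    · have hxd : x ≤ d := hxy.le.trans hyd
      have exy : φ y - φ x = s0 * (y - x) := by simp only [hφ, if_pos hxd, if_pos hyd]; ring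
      by_cases hzd : z ≤ d
      · have ezy : φ z - φ y = s0 * (z - y) := by simp only [hφ, if_pos hyd, if_pos hzd]; ring
        rw [exy, ezy, mul_div_assoc, mul_div_assoc,
          div_self (ne_of_gt (by linarith : (0:ℝ) < y - x)), div_self (ne_of_gt (by linarith : (0:ℝ) < z - y))]
      · push_neg at hzd
        have hz' := h_ge z hz hzd
        have ezy : φ z - φ y = f z - (f c + s0 * (y - c)) := by
          simp only [hφ, if_pos hyd, if_neg (not_le.2 hzd)]
        rw [exy, ezy, mul_div_assoc, div_self (ne_of_gt (by linarith : (0:ℝ) < y - x)), mul_one,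
          le_div_iff₀ (by linarith : (0:ℝ) < z - y)]
        nlinarith [hz']
    · push_neg at hyd
      have hzd : ¬ z ≤ d := by push_neg; linarith
      have hy' : y ∈ Set.Icc c b := ⟨by linarith, hy.2⟩
      have hz' : z ∈ Set.Icc c b := ⟨by linarith, hz.2⟩
      have hRHS := hf_conv.slope_mono_adjacent (x := d) (y := y) (z := z)
        ⟨hcd.le, by linarith⟩ hz' hyd hyz
      by_cases hxd : x ≤ d
      · have exy : φ y - φ x = f y - (f c + s0 * (x - c)) := by
          simp only [hφ, if_pos hxd, if_neg (not_le.2 hyd)]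
        have ezy : φ z - φ y = f z - f y := by
          simp only [hφ, if_neg (not_le.2 hyd), if_neg hzd]
        rw [exy, ezy]
        refine le_trans ?_ hRHS
        rw [div_le_div_iff₀ (by linarith : (0:ℝ) < y - x) (by linarith : (0:ℝ) < y - d)]
        have hA := h_ge y hy hyd
        nlinarith [hs0dc, mul_nonneg (sub_nonneg.2 hA) (sub_nonneg.2 hxd)]
      · push_neg at hxd
        have exy : φ y - φ x = f y - f x := by
          simp only [hφ, if_neg (not_le.2 hyd), if_neg (not_le.2 hxd)]
        have ezy : φ z - φ y = f z - f y := by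
          simp only [hφ, if_neg (not_le.2 hyd), if_neg hzd]
        rw [exy, ezy]
        exact hf_conv.slope_mono_adjacent ⟨by linarith, hx.2⟩ hz' hxy hyz
  -- integrability
  have intf1 : IntegrableOn f (Set.Icc a b) μ₁ := hf_cont.integrableOn_compact isCompact_Icc
  have intf2 : IntegrableOn f (Set.Icc a b) μ₂ := hf_cont.integrableOn_compact isCompact_Icc
  have intp1 : IntegrableOn φ (Set.Icc a b) μ₁ := φcont.integrableOn_compact isCompact_Icc
  have intp2 : IntegrableOn φ (Set.Icc a b) μ₂ := φcont.integrableOn_compact isCompact_Icc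
  -- barycenter relation
  have hmbμ : m * bμ = (∫ x in Set.Icc a b, x ∂μ₁) - ∫ x in Set.Icc a b, x ∂μ₂ := by
    rw [hbμ_def, ← mul_assoc, mul_inv_cancel₀ (ne_of_gt hm_pos), one_mul]
  -- SP inequality applied to affine minorants of φ
  have jensen_aff : ∀ q r : ℝ, (∀ x ∈ Set.Icc a b, q + r * x ≤ φ x) →
      m * (q + r * bμ) ≤ (∫ x in Set.Icc a b, φ x ∂μ₁) - ∫ x in Set.Icc a b, φ x ∂μ₂ := by
    intro q r hqr
    have haff1 : IntegrableOn (fun x : ℝ => q + r * x) (Set.Icc a b) μ₁ :=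
      (integrable_const q).add ((continuousOn_id.integrableOn_compact isCompact_Icc : IntegrableOn (fun x : ℝ => x) (Set.Icc a b) μ₁).const_mul r)
    have haff2 : IntegrableOn (fun x : ℝ => q + r * x) (Set.Icc a b) μ₂ :=
      (integrable_const q).add ((continuousOn_id.integrableOn_compact isCompact_Icc : IntegrableOn (fun x : ℝ => x) (Set.Icc a b) μ₂).const_mul r)
    have hg := hSP (fun x => φ x - (q + r * x))
      (φcont.sub (Continuous.continuousOn (by fun_prop)))
      (φconv.sub (affine_concaveOn _ (convex_Icc a b) q r))
      (fun x hx => sub_nonneg.2 (hqr x hx))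
    rw [integral_sub intp1 haff1, integral_sub intp2 haff2,
      integral_affine, integral_affine] at hg
    have he : m * (q + r * bμ) = q * m + r * (m * bμ) := by ring
    rw [he, hmbμ, hm_def]
    linarith [hg]
  -- the barycenter lies below b
  have hbb : bμ ≤ b := by
    have hg := hSP (fun x => b + (-1) * x)
      (Continuous.continuousOn (by fun_prop))
      (affine_convexOn _ (convex_Icc a b) b (-1))
      (fun x hx => by linarith [hx.2])
    rw [integral_affine, integral_affine] at hg
    have h0 : 0 ≤ b * m - m * bμ := by
      rw [hmbμ, hm_def]; linarith [hg]
    by_contra hcon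
    push_neg at hcon
    nlinarith [h0, hm_pos, hcon]
  -- Jensen inequality for φ
  have hJen : m * φ bμ ≤ (∫ x in Set.Icc a b, φ x ∂μ₁) - ∫ x in Set.Icc a b, φ x ∂μ₂ := by
    rcases lt_or_eq_of_le hbb with hlt | heq
    · obtain ⟨s, -, hs⟩ := exists_support_slope φconv (hac.trans_le hbμ_ge) hlt
      have hj := jensen_aff (φ bμ - s * bμ) s (fun x hx => by linarith [hs x hx])
      calc m * φ bμ = m * (φ bμ - s * bμ + s * bμ) := by ring
      _ ≤ _ := hj
    · rw [heq]
      have hcb : c < b := by linarith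
      have hcwa : ContinuousWithinAt φ (Set.Ioo c b) b :=
        (φcont b ⟨hab, le_rfl⟩).mono (fun x hx => ⟨by linarith [hx.1], hx.2.le⟩)
      have hG : Filter.Tendsto (fun t => m * (φ t + (φ t - φ a) / (t - a) * (b - t)))
          (nhdsWithin b (Set.Ioo c b)) (nhds (m * φ b)) := by
        have hba : (b:ℝ) - a ≠ 0 := ne_of_gt (by linarith)
        have t0 : ContinuousWithinAt (fun t : ℝ => t - a) (Set.Ioo c b) b :=
          (continuous_sub_right a).continuousWithinAt
        have t1 : ContinuousWithinAt (fun t : ℝ => b - t) (Set.Ioo c b) b :=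
          (continuous_sub_left b).continuousWithinAt
        have t2 : ContinuousWithinAt (fun t => (φ t - φ a) / (t - a) * (b - t))
            (Set.Ioo c b) b := ((hcwa.sub continuousWithinAt_const).div t0 hba).mul t1
        have h1 : ContinuousWithinAt
            (fun t => m * (φ t + (φ t - φ a) / (t - a) * (b - t))) (Set.Ioo c b) b :=
          continuousWithinAt_const.mul (hcwa.add t2)
        have h2 : m * (φ b + (φ b - φ a) / (b - a) * (b - b)) = m * φ b := by ring
        exact h2 ▸ h1
      haveI hne : (nhdsWithin b (Set.Ioo c b)).NeBot := right_nhdsWithin_Ioo_neBot hcb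
      refine le_of_tendsto hG ?_
      filter_upwards [self_mem_nhdsWithin] with t ht
      obtain ⟨s, hs1, hs2⟩ := exists_support_slope φconv (hac.trans ht.1) ht.2
      have hj := jensen_aff (φ t - s * t) s (fun x hx => by linarith [hs2 x hx])
      rw [heq] at hj
      have hslope : (φ t - φ a) / (t - a) * (b - t) ≤ s * (b - t) :=
        mul_le_mul_of_nonneg_right hs1 (by linarith [ht.2])
      have hm2 := mul_le_mul_of_nonneg_left hslope hm_pos.le
      nlinarith [hj, hm2]
  -- relation between the integrals of f and φ
  have key : ∀ (μ : Measure ℝ) [IsFiniteMeasure μ],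
      (∫ x in Set.Icc a b, f x ∂μ) - ∫ x in Set.Icc a b, φ x ∂μ
        = (d - c)⁻¹ * ∫ x in Set.Icc a d,
            ((f x - f c) * (d - c) - (f d - f c) * (x - c)) ∂μ := by
    intro μ _
    have hfi : IntegrableOn f (Set.Icc a b) μ := hf_cont.integrableOn_compact isCompact_Icc
    have hpi : IntegrableOn φ (Set.Icc a b) μ := φcont.integrableOn_compact isCompact_Icc
    have hsub : IntegrableOn (fun x => f x - φ x) (Set.Icc a b) μ := hfi.sub hpi
    have hU : Set.Icc a d ∪ Set.Ioc d b = Set.Icc a b :=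
      Set.Icc_union_Ioc_eq_Icc (by linarith) (by linarith)
    have hdisj : Disjoint (Set.Icc a d) (Set.Ioc d b) :=
      Set.disjoint_left.2 (fun x hx hx' => absurd hx.2 (not_le.2 hx'.1))
    have e2 : ∫ x in Set.Ioc d b, (f x - φ x) ∂μ = 0 := by
      rw [setIntegral_congr_fun measurableSet_Ioc
        (fun x hx => by simp [hφ, not_le.2 hx.1] : Set.EqOn (fun x => f x - φ x) (fun _ => (0:ℝ)) (Set.Ioc d b))]
      simp
    have e1 : ∫ x in Set.Icc a d, (f x - φ x) ∂μ
        = (d - c)⁻¹ * ∫ x in Set.Icc a d,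
            ((f x - f c) * (d - c) - (f d - f c) * (x - c)) ∂μ := by
      rw [← integral_const_mul]
      refine setIntegral_congr_fun measurableSet_Icc (fun x hx => ?_)
      simp only [hφ, if_pos hx.2, hs0]
      field_simp
      ring
    rw [← integral_sub hfi hpi, ← hU,
      setIntegral_union hdisj measurableSet_Ioc
        (hsub.mono_set (hU ▸ Set.subset_union_left))
        (hsub.mono_set (hU ▸ Set.subset_union_right)),
      e1, e2, add_zero]
  have key1 := key μ₁
  have key2 := key μ₂
  have hdiff : ((∫ x in Set.Icc a b, φ x ∂μ₁) - ∫ x in Set.Icc a b, φ x ∂μ₂)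
      ≤ (∫ x in Set.Icc a b, f x ∂μ₁) - ∫ x in Set.Icc a b, f x ∂μ₂ := by
    have h0 : 0 ≤ (d - c)⁻¹ * ((∫ x in Set.Icc a d,
          ((f x - f c) * (d - c) - (f d - f c) * (x - c)) ∂μ₁) -
        ∫ x in Set.Icc a d, ((f x - f c) * (d - c) - (f d - f c) * (x - c)) ∂μ₂) :=
      mul_nonneg (inv_nonneg.2 hdc.le) hii
    nlinarith [key1, key2, h0]
  -- conclusion
  have hφbμ : f bμ ≤ φ bμ := by
    by_cases hbd : bμ ≤ d
    · have := h_le bμ ⟨hbμ_ge, hbd⟩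
      simpa only [hφ, if_pos hbd] using this
    · simp [hφ, hbd]
  have step1 : m * φ bμ ≤ (∫ x in Set.Icc a b, f x ∂μ₁) - ∫ x in Set.Icc a b, f x ∂μ₂ :=
    le_trans hJen hdiff
  refine le_trans hφbμ ?_
  have hfin := mul_le_mul_of_nonneg_left step1 (inv_nonneg.2 hm_pos.le)
  rwa [← mul_assoc, inv_mul_cancel₀ (ne_of_gt hm_pos), one_mul] at hfin
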